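/- Let a11, a20, a21, b11, b20, b21 be real numbers with b11 ≠ 0, a20 = a11 b20 / b11 (inflection point of real type), and a11 b21 − a21 b11 ≠ 0. Then the quadratic form Q(x,y) obtained as the 2-jet of g at the origin with parameters (β, μ) = (b20, a20) (and λ, α arbitrary) has discriminant D1 = 4 b20² (a11 b21 − a21 b11)² / b11², which is strictly positive provided b20 ≠ 0; hence g has a Morse A1⁻ singularity (equivalent to x² − y²). -/

import Mathlib

/-- At an inflection point of real type (`b11 ≠ 0`,
`a20 = a11 b20 / b11`) with `a11 b21 − a21 b11 ≠ 0`, taking the plane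
parameters `(β, μ) = (b20, a20)`, the 1-jet of the singular-set function `g`
vanishes, and the quadratic part `P x² + Q xy` of `j²g` (with
`P = 2(a20 b11 − a11 b20)λ + α(b21 μ − a21 β) + 3(b30 μ − a30 β)` and
`Q = 2(b21 μ − a21 β)`) has discriminant
`D1 = Q² − 4·P·0 = 4 b20² (a11 b21 − a21 b11)² / b11²`, which is strictly
positive when `b20 ≠ 0`; hence the quadratic part is nondegenerate indefinite
and `g` has a Morse `A1⁻` singularity (equivalent to `x² − y²`). -/
theorem morse_A1_minus_at_inflection_special_plane
    (a11 a20 a21 a30 b11 b20 b21 b30 α lam : ℝ)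
    (hb11 : b11 ≠ 0) (ha20 : a20 = a11 * b20 / b11)
    (h21 : a11 * b21 - a21 * b11 ≠ 0) :
    -- with (β, μ) = (b20, a20):
    ((α * b11 + 2 * b20) * a20 - (a11 * α + 2 * a20) * b20 = 0) ∧
    (b11 * a20 - a11 * b20 = 0) ∧
    ((2 * (b21 * a20 - a21 * b20)) ^ 2 -
        4 * (2 * (a20 * b11 - a11 * b20) * lam + α * (b21 * a20 - a21 * b20) +
              3 * (b30 * a20 - a30 * b20)) * 0 =
      4 * b20 ^ 2 * (a11 * b21 - a21 * b11) ^ 2 / b11 ^ 2) ∧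
    (b20 ≠ 0 →
      0 < 4 * b20 ^ 2 * (a11 * b21 - a21 * b11) ^ 2 / b11 ^ 2) := by
  subst ha20
  refine ⟨by field_simp; ring, by field_simp; ring, by field_simp; ring, fun hb20 => ?_⟩
  positivity
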